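/- Let Σ be a finite set, Q a probability distribution with q_σ > 0, r_1,…,r_k : Σ → ℝ, and ρ ∈ ℝ^k. If P* minimizes D(P||Q) over the open simplex Δ' subject to E_P r_i = ρ_i for 1 ≤ i ≤ k, and the constraint gradients are linearly independent, then there exist λ_0, λ_1, …, λ_k ∈ ℝ such that p*_σ = q_σ exp(−1 − λ_0 − Σ_{i=1}^k λ_i r_i(σ)) for all σ ∈ Σ. -/

import Mathlib

open Filter Real Topology

/-- First-order condition: the gradient of KL at the minimizer is orthogonal to
every feasible direction. -/
lemma key_orth {α : Type*} [Fintype α]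
    (q : α → ℝ) (hq : ∀ σ, 0 < q σ)
    {k : ℕ} (r : Fin k → α → ℝ) (ρ : Fin k → ℝ)
    (pstar : α → ℝ)
    (hpos : ∀ σ, 0 < pstar σ) (hsum : ∑ σ, pstar σ = 1)
    (hconstr : ∀ i, ∑ σ, pstar σ * r i σ = ρ i)
    (hmin : ∀ p : α → ℝ, (∀ σ, 0 < p σ) → (∑ σ, p σ = 1) →
      (∀ i, ∑ σ, p σ * r i σ = ρ i) →
      ∑ σ, pstar σ * Real.log (pstar σ / q σ) ≤
        ∑ σ, p σ * Real.log (p σ / q σ))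
    (u : α → ℝ) (hu0 : ∑ σ, u σ = 0) (hur : ∀ i, ∑ σ, u σ * r i σ = 0) :
    ∑ σ, u σ * Real.log (pstar σ / q σ) = 0 := by
  set g : ℝ → ℝ := fun t => ∑ σ, (pstar σ + t * u σ) * Real.log ((pstar σ + t * u σ) / q σ)
    with hg
  have hpos' : ∀ᶠ t in 𝓝 (0 : ℝ), ∀ σ, 0 < pstar σ + t * u σ := by
    rw [eventually_all]
    intro σ
    have hc : ContinuousAt (fun t : ℝ => pstar σ + t * u σ) 0 := by fun_prop
    have h0 : (0 : ℝ) < pstar σ + 0 * u σ := by simpa using hpos σ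
    exact (continuousAt_const.eventually_lt hc (by simpa using hpos σ))
  have hmin0 : IsLocalMin g 0 := by
    filter_upwards [hpos'] with t ht
    have h1 : ∑ σ, (pstar σ + t * u σ) = 1 := by
      rw [Finset.sum_add_distrib, hsum, ← Finset.mul_sum, hu0, mul_zero, add_zero]
    have h2 : ∀ i, ∑ σ, (pstar σ + t * u σ) * r i σ = ρ i := by
      intro i
      have : ∀ σ, (pstar σ + t * u σ) * r i σ
          = pstar σ * r i σ + t * (u σ * r i σ) := fun σ => by ring
      simp only [this, Finset.sum_add_distrib, ← Finset.mul_sum, hconstr i, hur i,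
        mul_zero, add_zero]
    have := hmin (fun σ => pstar σ + t * u σ) ht h1 h2
    simpa [hg] using this
  have hderiv : HasDerivAt g
      (∑ σ, ((Real.log (pstar σ) + 1) * u σ - u σ * Real.log (q σ))) 0 := by
    apply HasDerivAt.fun_sum
    intro σ _
    have haff : HasDerivAt (fun t : ℝ => pstar σ + t * u σ) (u σ) 0 := by
      simpa using ((hasDerivAt_id (0 : ℝ)).mul_const (u σ)).const_add (pstar σ)
    have hmul : HasDerivAt (fun t : ℝ => (pstar σ + t * u σ) * Real.log (pstar σ + t * u σ))
        ((Real.log (pstar σ) + 1) * u σ) 0 := by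
      have h1 := Real.hasDerivAt_mul_log (hpos σ).ne'
      have h2 : HasDerivAt (fun x : ℝ => x * Real.log x) (Real.log (pstar σ) + 1)
          ((fun t : ℝ => pstar σ + t * u σ) 0) := by simpa using h1
      exact h2.comp 0 haff
    have hev : (fun t : ℝ => (pstar σ + t * u σ) * Real.log (pstar σ + t * u σ)
          - (pstar σ + t * u σ) * Real.log (q σ))
        =ᶠ[𝓝 (0 : ℝ)] fun t => (pstar σ + t * u σ) * Real.log ((pstar σ + t * u σ) / q σ) := by
      filter_upwards [hpos'] with t ht
      rw [Real.log_div (ht σ).ne' (hq σ).ne']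
      ring
    exact (hmul.sub (haff.mul_const (Real.log (q σ)))).congr_of_eventuallyEq hev.symm
  have hzero := hmin0.hasDerivAt_eq_zero hderiv
  have hexp : ∀ σ, u σ * Real.log (pstar σ / q σ)
      = ((Real.log (pstar σ) + 1) * u σ - u σ * Real.log (q σ)) - u σ := by
    intro σ
    rw [Real.log_div (hpos σ).ne' (hq σ).ne']
    ring
  rw [Finset.sum_congr rfl fun σ _ => hexp σ, Finset.sum_sub_distrib, hzero, hu0, sub_zero]

/-- Lagrange-multiplier (Boltzmann) characterization of the minimum-KL
distribution: if `P*` minimizes `D(P‖Q)` over the open simplex subject to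
`E_P rᵢ = ρᵢ`, and `1, r₁, …, r_k` are linearly independent, then
`p*_σ = q_σ exp(−1 − λ₀ − ∑ λᵢ rᵢ(σ))` for some `λ₀, λ₁, …, λ_k`. -/
theorem stmt9 {α : Type*} [Fintype α] [Nonempty α]
    (q : α → ℝ) (hq : ∀ σ, 0 < q σ) (hq1 : ∑ σ, q σ = 1)
    {k : ℕ} (r : Fin k → α → ℝ) (ρ : Fin k → ℝ)
    (hlin : LinearIndependent ℝ
      (Fin.cons (fun _ => (1 : ℝ)) r : Fin (k + 1) → α → ℝ))
    (pstar : α → ℝ)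
    (hpos : ∀ σ, 0 < pstar σ) (hsum : ∑ σ, pstar σ = 1)
    (hconstr : ∀ i, ∑ σ, pstar σ * r i σ = ρ i)
    (hmin : ∀ p : α → ℝ, (∀ σ, 0 < p σ) → (∑ σ, p σ = 1) →
      (∀ i, ∑ σ, p σ * r i σ = ρ i) →
      ∑ σ, pstar σ * Real.log (pstar σ / q σ) ≤
        ∑ σ, p σ * Real.log (p σ / q σ)) :
    ∃ (l0 : ℝ) (l : Fin k → ℝ), ∀ σ,
      pstar σ = q σ * Real.exp (-1 - l0 - ∑ i, l i * r i σ) := by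
  classical
  set f : EuclideanSpace ℝ α := WithLp.toLp 2 (fun σ => Real.log (pstar σ / q σ)) with hfdef
  set v : Fin (k + 1) → EuclideanSpace ℝ α :=
    (fun j => WithLp.toLp 2 ((Fin.cons (fun _ => (1 : ℝ)) r : Fin (k + 1) → α → ℝ) j : α → ℝ)) with hvdef
  set W : Submodule ℝ (EuclideanSpace ℝ α) := Submodule.span ℝ (Set.range v) with hWdef
  have hfW : f ∈ W := by
    rw [← Submodule.orthogonal_orthogonal W, Submodule.mem_orthogonal]
    intro u hu
    have hinner : ∀ w : EuclideanSpace ℝ α, w ∈ W → ∑ σ, u σ * w σ = 0 := by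
      intro w hw
      have := (Submodule.mem_orthogonal W u).mp hu w hw
      simpa [PiLp.inner_apply, mul_comm] using this
    have hu0 : ∑ σ, u σ = 0 := by
      have := hinner (v 0) (Submodule.subset_span ⟨0, rfl⟩)
      simpa [hvdef] using this
    have hur : ∀ i, ∑ σ, u σ * r i σ = 0 := by
      intro i
      have := hinner (v i.succ) (Submodule.subset_span ⟨i.succ, rfl⟩)
      simpa [hvdef] using this
    have := key_orth q hq r ρ pstar hpos hsum hconstr hmin u hu0 hur
    simpa [PiLp.inner_apply, hfdef, mul_comm] using this
  obtain ⟨c, hc⟩ := Submodule.mem_span_range_iff_exists_fun ℝ |>.mp hfW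
  refine ⟨-1 - c 0, fun i => -(c i.succ), fun σ => ?_⟩
  have hc2 : ∑ j, c j • (Fin.cons (fun _ => (1 : ℝ)) r : Fin (k + 1) → α → ℝ) j
      = fun σ => Real.log (pstar σ / q σ) := by
    simpa only [hvdef, hfdef, WithLp.ofLp_sum, WithLp.ofLp_smul, WithLp.ofLp_toLp] using congrArg WithLp.ofLp hc
  have hfσ : f σ = c 0 + ∑ i, c i.succ * r i σ := by
    have := congrFun hc2 σ
    rw [Fin.sum_univ_succ] at this
    simpa [hfdef, Finset.sum_apply, Pi.smul_apply, smul_eq_mul] using this.symm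
  have harg : -1 - (-1 - c 0) - ∑ i, -(c i.succ) * r i σ = f σ := by
    rw [hfσ]
    simp only [neg_mul, Finset.sum_neg_distrib]
    ring
  rw [harg, hfdef, PiLp.toLp_apply]
  have : Real.exp (Real.log (pstar σ / q σ)) = pstar σ / q σ :=
    Real.exp_log (div_pos (hpos σ) (hq σ))
  rw [this, mul_comm]
  exact (div_mul_cancel₀ _ (hq σ).ne').symm
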